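/- Let n be an integer with |n| ≥ 2 and let P be the (finite, nonempty) set of prime numbers dividing n. The diagonal ring homomorphism φ : ℤ[1/n] → (∏_{p ∈ P} ℚ_p) × ℝ, whose coordinates are the natural inclusions of ℤ[1/n] into each p-adic field ℚ_p and into ℝ, is injective, its image is a discrete additive subgroup of the locally compact topological additive group (∏_{p ∈ P} ℚ_p) × ℝ, and the quotient topological group ((∏_{p ∈ P} ℚ_p) × ℝ) / φ(ℤ[1/n]) is compact. -/

import Mathlib

namespace Adelic

/-- `ℤ[1/n]`, the subring of `ℚ` generated by `1/n`. -/
def Rn (n : ℤ) : Subring ℚ := Subring.closure {1 / (n : ℚ)}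

/-- The set of primes dividing `n`. -/
def PrimesDiv (n : ℤ) : Type := {p : ℕ // Fact p.Prime ∧ (p : ℤ) ∣ n}

instance (n : ℤ) (p : PrimesDiv n) : Fact p.1.Prime := p.2.1

/-- The product `∏_{p ∣ n} ℚ_p`. -/
abbrev QpProd (n : ℤ) : Type := ∀ p : PrimesDiv n, ℚ_[p.1]

/-- The diagonal ring homomorphism `ℤ[1/n] → (∏_{p ∣ n} ℚ_p) × ℝ`, whose
coordinates are the natural inclusions. -/
noncomputable def diagEmb (n : ℤ) : Rn n →+* QpProd n × ℝ :=
  RingHom.prod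
    (Pi.ringHom fun p => (Rat.castHom ℚ_[p.1]).comp (Rn n).subtype)
    ((Rat.castHom ℝ).comp (Rn n).subtype)

end Adelic

open Adelic


section Aux

variable {n : ℤ}

lemma Rn_intCast (n : ℤ) (a : ℤ) : ((a : ℚ)) ∈ Rn n := intCast_mem (Rn n) a

lemma Rn_div_pow_mem (hn0 : n ≠ 0) {p : ℕ} (hpn : (p : ℤ) ∣ n) (a : ℤ) (k : ℕ) :
    ((a : ℚ) / (p : ℚ) ^ k) ∈ Rn n := by
  obtain ⟨m, hm⟩ := hpn
  have hp0 : (p : ℚ) ≠ 0 := by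
    rintro h
    apply hn0
    rw [hm]
    have : (p : ℤ) = 0 := by exact_mod_cast h
    simp [this]
  have hm0 : (m : ℚ) ≠ 0 := by
    rintro h
    apply hn0
    rw [hm]
    have : (m : ℤ) = 0 := by exact_mod_cast h
    simp [this]
  have hkey : ((a : ℚ) / (p : ℚ) ^ k) = a * ((m : ℚ) * (1 / (n : ℚ))) ^ k := by
    rw [hm]
    push_cast
    field_simp
    rw [mul_assoc, ← mul_pow, mul_one_div_cancel hp0, one_pow, mul_one]
  rw [hkey]
  exact mul_mem (Rn_intCast n a)
    (pow_mem (mul_mem (Rn_intCast n m) (Subring.subset_closure rfl)) k)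

lemma Rn_mem_structure (hn0 : n ≠ 0) {x : ℚ} (hx : x ∈ Rn n) :
    ∃ a : ℤ, ∃ k : ℕ, x = (a : ℚ) / (n : ℚ) ^ k := by
  have hnq : (n : ℚ) ≠ 0 := by exact_mod_cast hn0
  induction hx using Subring.closure_induction with
  | mem x hx =>
    rw [Set.mem_singleton_iff] at hx
    exact ⟨1, 1, by simp [hx]⟩
  | zero => exact ⟨0, 0, by simp⟩
  | one => exact ⟨1, 0, by simp⟩
  | add x y hx hy ihx ihy =>
    obtain ⟨a, k, rfl⟩ := ihx
    obtain ⟨b, l, rfl⟩ := ihy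
    refine ⟨a * n ^ l + b * n ^ k, k + l, ?_⟩
    push_cast
    field_simp
    ring
  | neg x hx ihx =>
    obtain ⟨a, k, rfl⟩ := ihx
    exact ⟨-a, k, by push_cast; ring⟩
  | mul x y hx hy ihx ihy =>
    obtain ⟨a, k, rfl⟩ := ihx
    obtain ⟨b, l, rfl⟩ := ihy
    refine ⟨a * b, k + l, ?_⟩
    push_cast
    field_simp
    ring

lemma one_lt_padicNorm_of_dvd_den {p : ℕ} (hp : p.Prime) {x : ℚ} (hx : x ≠ 0)
    (h : p ∣ x.den) : 1 < padicNorm p x := by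
  haveI : Fact p.Prime := ⟨hp⟩
  have hnum : ¬ (p : ℤ) ∣ x.num := by
    intro hd
    have hcop := x.reduced
    have : p ∣ Nat.gcd x.num.natAbs x.den :=
      Nat.dvd_gcd (Int.natCast_dvd_natCast.mp (by simpa [Int.natAbs_dvd_natAbs] using hd)) h
    rw [hcop] at this
    exact hp.one_lt.ne' (Nat.dvd_one.mp this)
  have h1 : padicValInt p x.num = 0 := padicValInt.eq_zero_of_not_dvd hnum
  have h2 : 1 ≤ padicValNat p x.den := one_le_padicValNat_of_dvd x.den_nz h
  have hval : padicValRat p x ≤ -1 := by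
    rw [padicValRat_def, h1]
    omega
  rw [padicNorm.eq_zpow_of_nonzero hx]
  have hp1 : (1 : ℚ) < (p : ℚ) := by exact_mod_cast hp.one_lt
  calc (1 : ℚ) < (p : ℚ) ^ (1 : ℤ) := by simpa using hp1
    _ ≤ (p : ℚ) ^ (-padicValRat p x) := by
        apply zpow_le_zpow_right₀ hp1.le
        omega

lemma Rn_eq_zero_of_small (hn0 : n ≠ 0) {x : ℚ} (hx : x ∈ Rn n)
    (hple : ∀ p : ℕ, p.Prime → (p : ℤ) ∣ n → padicNorm p x ≤ 1)
    (habs : |x| < 1) : x = 0 := by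
  by_contra h0
  have hden : x.den = 1 := by
    by_contra hd
    obtain ⟨p, hp', hpd⟩ := Nat.exists_prime_and_dvd hd
    obtain ⟨a, k, hxe⟩ := Rn_mem_structure hn0 hx
    have hdvd : (x.den : ℤ) ∣ n ^ k := by
      have := Rat.den_dvd a (n ^ k)
      rw [Rat.divInt_eq_div] at this
      rw [hxe]
      simpa using this
    have hpn : (p : ℤ) ∣ n := by
      haveI : Fact p.Prime := ⟨hp'⟩
      have h1 : (p : ℤ) ∣ n ^ k := dvd_trans (Int.natCast_dvd_natCast.mpr hpd) hdvd
      exact Int.Prime.dvd_pow' hp' h1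
    exact absurd (hple p hp' hpn) (not_le.2 (one_lt_padicNorm_of_dvd_den hp' h0 hpd))
  have hxint : x = (x.num : ℚ) := by
    conv_lhs => rw [← Rat.num_div_den x]
    rw [hden]; simp
  rw [hxint] at habs h0
  have h1 : |x.num| < 1 := by exact_mod_cast (by simpa using habs : |(x.num : ℚ)| < 1)
  have : x.num = 0 := by
    rcases lt_trichotomy x.num 0 with h | h | h
    · exfalso; rw [abs_of_neg h] at h1; omega
    · exact h
    · exfalso; rw [abs_of_pos h] at h1; omega
  simp [this] at h0

/-- Strong approximation at one prime. -/
lemma strong_approx (hn0 : n ≠ 0) {p : ℕ} [hfact : Fact p.Prime] (hpn : (p : ℤ) ∣ n)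
    (x : ℚ_[p]) :
    ∃ r : ℚ, r ∈ Rn n ∧ ‖x - (r : ℚ_[p])‖ ≤ 1 ∧
      ∀ q : ℕ, q.Prime → q ≠ p → padicNorm q r ≤ 1 := by
  obtain ⟨r₀, hr₀⟩ := Padic.rat_dense (p := p) x (ε := 1) one_pos
  set k := padicValNat p r₀.den with hk
  set b : ℕ := r₀.den / p ^ k with hb
  have hpk_dvd : p ^ k ∣ r₀.den := pow_padicValNat_dvd
  have hbd : r₀.den = p ^ k * b := by rw [hb, Nat.mul_div_cancel' hpk_dvd]
  have hb0 : b ≠ 0 := by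
    intro hb0
    exact r₀.den_nz (by rw [hbd, hb0, mul_zero])
  have hpb : ¬ p ∣ b := by
    have := Nat.not_dvd_ordCompl hfact.out r₀.den_nz
    rwa [Nat.factorization_def _ hfact.out, ← hk, ← hb] at this
  have hcop : Nat.Coprime (p ^ k) b :=
    Nat.Coprime.pow_left k ((Nat.Prime.coprime_iff_not_dvd hfact.out).mpr hpb)
  obtain ⟨u, v, huv⟩ := (Nat.isCoprime_iff_coprime).mpr hcop
  have hp0 : (p : ℚ) ≠ 0 := by exact_mod_cast hfact.out.ne_zero
  have hb0' : (b : ℚ) ≠ 0 := by exact_mod_cast hb0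
  have hQ : (u : ℚ) * (p : ℚ) ^ k + (v : ℚ) * (b : ℚ) = 1 := by exact_mod_cast huv
  refine ⟨((r₀.num * v : ℤ) : ℚ) / (p : ℚ) ^ k, Rn_div_pow_mem hn0 hpn _ k, ?_, ?_⟩
  · set r : ℚ := ((r₀.num * v : ℤ) : ℚ) / (p : ℚ) ^ k with hr
    have hpk0 : ((p : ℚ) ^ k) ≠ 0 := pow_ne_zero _ hp0
    have hdenc : ((r₀.den : ℚ)) = (p : ℚ) ^ k * (b : ℚ) := by exact_mod_cast congrArg (Nat.cast : ℕ → ℚ) hbd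
    have hrd : (r₀ : ℚ) * (r₀.den : ℚ) = (r₀.num : ℚ) := Rat.mul_den_eq_num r₀
    have key : (r₀ - r) * ((p : ℚ) ^ k * (b : ℚ)) = ((r₀.num * u : ℤ) : ℚ) * (p : ℚ) ^ k := by
      have expand : (r₀ - r) * ((p : ℚ) ^ k * (b : ℚ))
          = r₀ * ((p : ℚ) ^ k * (b : ℚ)) - (r₀.num : ℚ) * v * b := by
        rw [hr]; field_simp; push_cast; ring
      rw [expand, ← hdenc, hrd]
      push_cast
      linear_combination (-(r₀.num : ℚ)) * hQ
    have hdiff : r₀ - r = ((r₀.num * u : ℤ) : ℚ) / (b : ℚ) := by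
      rw [eq_div_iff hb0']
      have := key
      rw [mul_comm ((p : ℚ) ^ k) (b : ℚ), ← mul_assoc] at this
      exact mul_right_cancel₀ hpk0 this
    have hq1 : padicNorm p (r₀ - r) ≤ 1 := by
      rw [hdiff]
      have hb1 : padicNorm p ((b : ℤ) : ℚ) = 1 :=
        (padicNorm.int_eq_one_iff (p := p) (b : ℤ)).mpr (by exact_mod_cast hpb)
      have : padicNorm p (((r₀.num * u : ℤ) : ℚ) / ((b : ℤ) : ℚ)) ≤ 1 := by
        rw [padicNorm.div, hb1, div_one]
        exact padicNorm.of_int _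
      push_cast at this ⊢
      exact this
    have h2 : ‖((r₀ - r : ℚ) : ℚ_[p])‖ ≤ 1 := by
      rw [Padic.eq_padicNorm]
      exact_mod_cast hq1
    have hsplit : x - (r : ℚ_[p]) = (x - (r₀ : ℚ_[p])) + ((r₀ - r : ℚ) : ℚ_[p]) := by
      push_cast
      ring
    rw [hsplit]
    exact (IsUltrametricDist.norm_add_le_max _ _).trans (max_le hr₀.le h2)
  · intro q hq hqp
    haveI : Fact q.Prime := ⟨hq⟩
    have h1 : padicNorm q ((r₀.num * v : ℤ) : ℚ) ≤ 1 := padicNorm.of_int _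
    have h2 : padicNorm q (((p : ℤ) ^ k : ℤ) : ℚ) = 1 := by
      rw [padicNorm.int_eq_one_iff]
      intro hdvd
      exact hqp (((Nat.prime_dvd_prime_iff_eq hq hfact.out).mp
        (by exact_mod_cast Int.Prime.dvd_pow' hq hdvd)))
    have : padicNorm q (((r₀.num * v : ℤ) : ℚ) / (((p : ℤ) ^ k : ℤ) : ℚ)) ≤ 1 := by
      rw [padicNorm.div, h2, div_one]
      exact h1
    push_cast at this ⊢
    exact this
lemma padicNorm_le_one_of_lt_two {p : ℕ} (hp : p.Prime) {x : ℚ}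
    (h : padicNorm p x < 3 / 2) : padicNorm p x ≤ 1 := by
  by_contra hlt
  push_neg at hlt
  have hx0 : x ≠ 0 := by
    intro h0
    rw [h0, padicNorm.zero] at hlt
    norm_num at hlt
  rw [padicNorm.eq_zpow_of_nonzero hx0] at hlt h
  have hp1 : (1 : ℚ) < (p : ℚ) := by exact_mod_cast hp.one_lt
  have hv : 1 ≤ -padicValRat p x := by
    by_contra hv
    push_neg at hv
    have hle : -padicValRat p x ≤ 0 := by omega
    have := zpow_le_one_of_nonpos₀ hp1.le hle
    linarith
  have h2 : (2 : ℚ) ≤ (p : ℚ) := by exact_mod_cast hp.two_le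
  have h3 : (p : ℚ) ^ (1 : ℤ) ≤ (p : ℚ) ^ (-padicValRat p x) :=
    zpow_le_zpow_right₀ hp1.le hv
  simp only [zpow_one] at h3
  linarith

lemma PrimesDiv.finite (hn0 : n ≠ 0) : Finite (PrimesDiv n) := by
  have key : ∀ p : PrimesDiv n, p.1 < n.natAbs + 1 := by
    intro p
    have h1 : p.1 ∣ n.natAbs := by
      have := Int.natAbs_dvd_natAbs.mpr p.2.2
      simpa using this
    have := Nat.le_of_dvd (Int.natAbs_pos.mpr hn0) h1
    omega
  exact Finite.of_injective (fun p : PrimesDiv n => (⟨p.1, key p⟩ : Fin (n.natAbs + 1)))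
    (fun a b hab => Subtype.ext (by simpa [Fin.ext_iff] using hab))

end Aux
/-- the diagonal embedding of `ℤ[1/n]` into `(∏_{p ∣ n} ℚ_p) × ℝ`
is injective with discrete image and compact quotient. -/
theorem stmt13 (n : ℤ) (hn : 2 ≤ |n|) :
    Function.Injective (diagEmb n) ∧
    DiscreteTopology ((diagEmb n).toAddMonoidHom.range : AddSubgroup (QpProd n × ℝ)) ∧
    CompactSpace ((QpProd n × ℝ) ⧸ (diagEmb n).toAddMonoidHom.range) := by
  have hn0 : n ≠ 0 := by
    intro h
    rw [h] at hn
    norm_num at hn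
  haveI : Finite (PrimesDiv n) := PrimesDiv.finite hn0
  haveI : Fintype (PrimesDiv n) := Fintype.ofFinite _
  haveI : DecidableEq (PrimesDiv n) := Classical.decEq _
  have hinj : Function.Injective (diagEmb n) := by
    intro a b hab
    have h2 := congrArg Prod.snd hab
    simp only [diagEmb, RingHom.prod_apply, RingHom.coe_comp, Function.comp_apply,
      Rat.coe_castHom, Subring.coe_subtype] at h2
    exact Subtype.ext (by exact_mod_cast h2)
  refine ⟨hinj, ?_, ?_⟩
  · -- discreteness
    set S := (diagEmb n).toAddMonoidHom.range with hS
    set U : Set (QpProd n × ℝ) :=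
      (Set.univ.pi fun p : PrimesDiv n => Metric.ball (0 : ℚ_[p.1]) (3/2)) ×ˢ
        Metric.ball (0 : ℝ) 1 with hU
    have hUopen : IsOpen U :=
      (isOpen_set_pi Set.finite_univ fun p _ => Metric.isOpen_ball).prod Metric.isOpen_ball
    have hU0 : (0 : QpProd n × ℝ) ∈ U := by
      refine ⟨fun p _ => ?_, ?_⟩
      · simp only [Metric.mem_ball, Pi.zero_apply, dist_self]
        norm_num
      · simp only [Metric.mem_ball, dist_self]
        norm_num
    have hkey : ∀ y ∈ U, y ∈ S → y = 0 := by
      rintro y hyU ⟨x, rfl⟩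
      have hx0 : (x : ℚ) = 0 := by
        apply Rn_eq_zero_of_small hn0 x.2
        · intro p hp hpn
          have hmem := hyU.1 ⟨p, ⟨⟨hp⟩, hpn⟩⟩ (Set.mem_univ _)
          haveI : Fact p.Prime := ⟨hp⟩
          have hlt : ‖((x : ℚ) : ℚ_[p])‖ < 3/2 := by
            have h := Metric.mem_ball.mp hmem; rw [dist_zero_right] at h; exact h
          rw [Padic.eq_padicNorm,
            show ((3 : ℝ)/2) = (((3/2 : ℚ) : ℝ)) by norm_num] at hlt
          exact padicNorm_le_one_of_lt_two hp (by exact_mod_cast hlt)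
        · have hmem := hyU.2
          have hlt : |((x : ℚ) : ℝ)| < 1 := by
            have h := Metric.mem_ball.mp hmem; rw [Real.dist_eq, sub_zero] at h; exact h
          have : ((|(x : ℚ)| : ℚ) : ℝ) < 1 := by push_cast; exact hlt
          exact_mod_cast this
      have hx : x = 0 := Subtype.ext hx0
      rw [hx, map_zero]
    have hsingleton : ({0} : Set S) = (Subtype.val ⁻¹' U : Set S) := by
      ext y
      simp only [Set.mem_singleton_iff, Set.mem_preimage]
      constructor
      · rintro rfl
        exact hU0
      · intro hy
        exact Subtype.ext (hkey y.1 hy y.2)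
    apply discreteTopology_of_isOpen_singleton_zero
    rw [hsingleton]
    exact hUopen.preimage continuous_subtype_val
  · -- compact quotient
    set S := (diagEmb n).toAddMonoidHom.range with hS
    set K : Set (QpProd n × ℝ) :=
      (Set.univ.pi fun p : PrimesDiv n => Metric.closedBall (0 : ℚ_[p.1]) 1) ×ˢ
        Set.Icc (0 : ℝ) 1 with hK
    have hKcomp : IsCompact K :=
      (isCompact_univ_pi fun p => isCompact_closedBall _ _).prod isCompact_Icc
    have hcover : ∀ y : QpProd n × ℝ, ∃ g : Rn n, y - diagEmb n g ∈ K := by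
      rintro ⟨x, t⟩
      choose r hr1 hr2 hr3 using fun p : PrimesDiv n =>
        strong_approx (n := n) hn0 p.2.2 (x p)
      set s : ℚ := ∑ p : PrimesDiv n, r p with hs
      have hsRn : s ∈ Rn n := Subring.sum_mem _ fun p _ => hr1 p
      set m : ℤ := ⌊t - (s : ℝ)⌋ with hm
      set g : ℚ := s + m with hg
      have hgRn : g ∈ Rn n := Subring.add_mem _ hsRn (Rn_intCast n m)
      refine ⟨⟨g, hgRn⟩, ?_, ?_⟩
      · intro p _
        simp only [Metric.mem_closedBall, dist_zero_right]
        have hfst : ((⟨x, t⟩ : QpProd n × ℝ) - diagEmb n ⟨g, hgRn⟩).1 p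
            = x p - ((g : ℚ) : ℚ_[p.1]) := by
          simp [diagEmb]
          rfl
        rw [hfst]
        set A : ℚ_[p.1] := x p - ((r p : ℚ) : ℚ_[p.1]) with hA
        set B : ℚ_[p.1] := (((s - r p : ℚ)) : ℚ_[p.1]) with hB
        set C : ℚ_[p.1] := (((m : ℚ)) : ℚ_[p.1]) with hC
        have hsplit : x p - ((g : ℚ) : ℚ_[p.1]) = A + (-B) + (-C) := by
          rw [hA, hB, hC, hg]
          push_cast
          ring
        have hBle : ‖B‖ ≤ 1 := by
          rw [hB, Padic.eq_padicNorm]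
          have hsum : s - r p = ∑ q ∈ Finset.univ.erase p, r q := by
            rw [Finset.sum_erase_eq_sub (Finset.mem_univ p), ← hs]
          rw [hsum]
          have : padicNorm p.1 (∑ q ∈ Finset.univ.erase p, r q) ≤ 1 := by
            apply padicNorm.sum_le'
            · intro q hq
              have hqp : q.1 ≠ p.1 := by
                intro hqp'
                exact (Finset.mem_erase.mp hq).1 (Subtype.ext hqp')
              exact hr3 q p.1 p.2.1.out (Ne.symm hqp)
            · norm_num
          exact_mod_cast this
        have hCle : ‖C‖ ≤ 1 := by
          rw [hC, show ((m : ℚ) : ℚ_[p.1]) = ((m : ℚ_[p.1])) by push_cast; ring]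
          exact Padic.norm_int_le_one m
        rw [hsplit]
        refine (IsUltrametricDist.norm_add_le_max _ _).trans (max_le
          ((IsUltrametricDist.norm_add_le_max _ _).trans (max_le (hr2 p)
            (by rwa [norm_neg]))) (by rwa [norm_neg]))
      · have hsnd : ((⟨x, t⟩ : QpProd n × ℝ) - diagEmb n ⟨g, hgRn⟩).2
            = t - ((g : ℚ) : ℝ) := by
          simp [diagEmb]
        rw [hsnd, show ((g : ℚ) : ℝ) = (s : ℝ) + (m : ℝ) by rw [hg]; push_cast; ring]
        constructor
        · have := Int.floor_le (t - (s : ℝ))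
          rw [← hm] at this
          linarith
        · have := Int.lt_floor_add_one (t - (s : ℝ))
          rw [← hm] at this
          linarith
    have huniv : (Set.univ : Set ((QpProd n × ℝ) ⧸ S)) = QuotientAddGroup.mk '' K := by
      ext y
      simp only [Set.mem_univ, true_iff]
      obtain ⟨z, rfl⟩ := QuotientAddGroup.mk_surjective y
      obtain ⟨g, hg⟩ := hcover z
      refine ⟨z - diagEmb n g, hg, ?_⟩
      rw [QuotientAddGroup.eq]
      have heq : -(z - diagEmb n g) + z = diagEmb n g := by abel
      rw [heq]
      exact ⟨g, rfl⟩
    constructor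
    rw [huniv]
    exact hKcomp.image QuotientAddGroup.continuous_mk
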